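/- Let p > 3 be a prime and x a rational p-integer. Then \sum_{k=0}^{\lfloor p/3 \rfloor} (3k)!/(27^k k!^3) \cdot (x^k - (-1)^{\lfloor p/3 \rfloor} (1-x)^k) \equiv 0 \pmod{p}. -/

import Mathlib

open Finset

/-- `a ≡ b (mod p^k)` as rationals: `a - b` is `p^k` times a `p`-integral rational. -/
def ratCongr (p k : ℕ) (a b : ℚ) : Prop :=
  ∃ c : ℚ, a - b = (p : ℚ) ^ k * c ∧ ¬ (p ∣ c.den)

open Nat

/-! ### Auxiliary lemmas -/

section den
variable {p : ℕ}

lemma dnd_add (hp : p.Prime) {a b : ℚ} (ha : ¬ p ∣ a.den) (hb : ¬ p ∣ b.den) :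
    ¬ p ∣ (a + b).den := by
  intro h
  rcases (Nat.Prime.dvd_mul hp).mp (h.trans (Rat.add_den_dvd a b)) with h | h
  exacts [ha h, hb h]

lemma dnd_mul (hp : p.Prime) {a b : ℚ} (ha : ¬ p ∣ a.den) (hb : ¬ p ∣ b.den) :
    ¬ p ∣ (a * b).den := by
  intro h
  rcases (Nat.Prime.dvd_mul hp).mp (h.trans (Rat.mul_den_dvd a b)) with h | h
  exacts [ha h, hb h]

lemma dnd_neg (hp : p.Prime) {a : ℚ} (ha : ¬ p ∣ a.den) : ¬ p ∣ (-a).den := by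
  rwa [Rat.neg_den]

lemma dnd_sub (hp : p.Prime) {a b : ℚ} (ha : ¬ p ∣ a.den) (hb : ¬ p ∣ b.den) :
    ¬ p ∣ (a - b).den := by
  rw [sub_eq_add_neg]; exact dnd_add hp ha (dnd_neg hp hb)

lemma dnd_one (hp : p.Prime) : ¬ p ∣ (1 : ℚ).den := by
  rw [Rat.den_ofNat]
  exact fun h => (Nat.Prime.one_lt hp).ne' (Nat.dvd_one.mp h)

lemma dnd_pow (hp : p.Prime) {a : ℚ} (ha : ¬ p ∣ a.den) : ∀ n : ℕ, ¬ p ∣ (a ^ n).den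
  | 0 => by rw [pow_zero]; exact dnd_one hp
  | n + 1 => by rw [pow_succ]; exact dnd_mul hp (dnd_pow hp ha n) ha

lemma dnd_zero (hp : p.Prime) : ¬ p ∣ (0 : ℚ).den := by
  rw [Rat.den_ofNat]
  exact fun h => (Nat.Prime.one_lt hp).ne' (Nat.dvd_one.mp h)

lemma dnd_sum (hp : p.Prime) {s : Finset ℕ} {f : ℕ → ℚ} (hf : ∀ i ∈ s, ¬ p ∣ (f i).den) :
    ¬ p ∣ (∑ i ∈ s, f i).den := by
  classical
  induction s using Finset.induction_on with
  | empty => simpa using dnd_zero hp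
  | insert a s' hni ih =>
    rw [Finset.sum_insert hni]
    exact dnd_add hp (hf a (Finset.mem_insert_self a s'))
      (ih fun i hi => hf i (Finset.mem_insert_of_mem hi))
end den

/-! ### The combinatorial identity -/

lemma vand (m t : ℕ) (ht : t ≤ m) :
    ∑ k ∈ range (m + 1), m.choose k ^ 2 * k.choose (m - t) =
      m.choose t * (m + t).choose t := by
  have hsub : Finset.Ico (m - t) (m + 1) ⊆ Finset.range (m + 1) := by
    intro k hk; simp only [Finset.mem_Ico] at hk; simp only [Finset.mem_range]; omega
  rw [← Finset.sum_subset hsub]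
  · rw [Finset.sum_Ico_eq_sum_range]
    have h1 : m + 1 - (m - t) = t + 1 := by omega
    rw [h1]
    have : ∀ i ∈ range (t + 1),
        m.choose (m - t + i) ^ 2 * (m - t + i).choose (m - t) =
        m.choose (m - t) * (t.choose i * m.choose (t - i)) := by
      intro i hi
      simp only [Finset.mem_range] at hi
      have hkm : m - t + i ≤ m := by omega
      have hs : m - t ≤ m - t + i := by omega
      rw [pow_two, mul_assoc, Nat.choose_mul hs]
      have e1 : m - (m - t) = t := by omega
      have e2 : m - t + i - (m - t) = i := by omega
      have e3 : m - (m - t + i) = t - i := by omega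
      rw [e1, e2, ← Nat.choose_symm hkm, e3]
      ring
    rw [Finset.sum_congr rfl this, ← Finset.mul_sum]
    have hv : (t + m).choose t = ∑ i ∈ range (t + 1), t.choose i * m.choose (t - i) := by
      rw [Nat.add_choose_eq, Finset.Nat.sum_antidiagonal_eq_sum_range_succ_mk]
    rw [← hv, Nat.choose_symm ht, Nat.add_comm t m]
  · intro k hk hk'
    simp only [Finset.mem_range] at hk
    simp only [Finset.mem_Ico] at hk'
    have : k < m - t := by omega
    rw [Nat.choose_eq_zero_of_lt this, Nat.mul_zero]

lemma keyId (m : ℕ) (y : ℚ) :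
    ∑ k ∈ range (m + 1), (-1 : ℚ) ^ k * (m.choose k : ℚ) * ((m + k).choose k : ℚ) * y ^ k =
      ∑ k ∈ range (m + 1), (m.choose k : ℚ) ^ 2 * (-y) ^ (m - k) * (1 - y) ^ k := by
  have inner : ∀ k, k ≤ m →
      ((m.choose k : ℚ)) ^ 2 * (-y) ^ (m - k) * (1 - y) ^ k =
      ∑ e ∈ range (m + 1), (m.choose k : ℚ) ^ 2 * (k.choose (m - e) : ℚ) * (-y) ^ e := by
    intro k hk
    have hexp : (1 - y) ^ k = ∑ j ∈ range (k + 1), (-y) ^ j * 1 ^ (k - j) * (k.choose j : ℚ) := by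
      rw [show (1 - y : ℚ) = -y + 1 by ring, ← add_pow]
    rw [hexp, Finset.mul_sum]
    have hsub : Finset.Ico (m - k) (m + 1) ⊆ Finset.range (m + 1) := by
      intro e he; simp only [Finset.mem_Ico] at he; simp only [Finset.mem_range]; omega
    rw [← Finset.sum_subset hsub]
    · rw [Finset.sum_Ico_eq_sum_range]
      have h1 : m + 1 - (m - k) = k + 1 := by omega
      rw [h1]
      apply Finset.sum_congr rfl
      intro j hj
      simp only [Finset.mem_range] at hj
      have e2 : m - (m - k + j) = k - j := by omega
      rw [e2, Nat.choose_symm (show j ≤ k by omega), one_pow, mul_one,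
        show m - k + j = (m - k) + j from rfl, pow_add]
      ring
    · intro e he he'
      simp only [Finset.mem_range] at he
      simp only [Finset.mem_Ico] at he'
      have : k < m - e := by omega
      rw [Nat.choose_eq_zero_of_lt this]
      ring
  rw [Finset.sum_congr rfl (fun k hk => inner k (Finset.mem_range_succ_iff.mp hk))]
  rw [Finset.sum_comm]
  apply Finset.sum_congr rfl
  intro e he
  simp only [Finset.mem_range] at he
  have he' : e ≤ m := by omega
  have hcast : ∑ k ∈ range (m + 1), (m.choose k : ℚ) ^ 2 * (k.choose (m - e) : ℚ) =
      (m.choose e : ℚ) * ((m + e).choose e : ℚ) := by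
    exact_mod_cast congrArg (Nat.cast : ℕ → ℚ) (vand m e he')
  rw [← Finset.sum_mul, hcast, neg_pow]
  ring

lemma sym (m : ℕ) (x : ℚ) :
    ∑ k ∈ range (m + 1), (-1 : ℚ) ^ k * (m.choose k : ℚ) * ((m + k).choose k : ℚ) * (1 - x) ^ k =
      (-1 : ℚ) ^ m *
        ∑ k ∈ range (m + 1), (-1 : ℚ) ^ k * (m.choose k : ℚ) * ((m + k).choose k : ℚ) * x ^ k := by
  rw [keyId m (1 - x), keyId m x, Finset.mul_sum, ← Finset.sum_range_reflect]
  apply Finset.sum_congr rfl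
  intro j hj
  simp only [Finset.mem_range] at hj
  have hjm : j ≤ m := by omega
  have e1 : m + 1 - 1 - j = m - j := by omega
  have e2 : m - (m - j) = j := by omega
  rw [e1, e2, Nat.choose_symm hjm]
  have h1 : (-1 : ℚ) ^ (m - j) * (-1 : ℚ) ^ j = (-1) ^ m := by
    rw [← pow_add]; congr 1; omega
  have h2 : (-1 : ℚ) ^ j * (-1 : ℚ) ^ j = 1 := by rw [← mul_pow]; norm_num
  have h3 : (-1 : ℚ) ^ (m - j) = (-1) ^ m * (-1) ^ j := by
    rw [← h1, mul_assoc, h2, mul_one]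
  rw [show (1 - (1 - x) : ℚ) = x by ring, neg_pow (1 - x), neg_pow x, h3]
  have h4 : (-1 : ℚ) ^ (m * 2) = 1 := by rw [mul_comm, pow_mul]; norm_num
  ring_nf
  rw [h4, mul_one]

/-! ### Factorial product identities -/

lemma fact3 : ∀ k : ℕ, (3 * k)! = ∏ j ∈ range k, ((3 * j + 1) * (3 * j + 2) * (3 * j + 3))
  | 0 => rfl
  | k + 1 => by
    rw [Finset.prod_range_succ, ← fact3 k]
    have : 3 * (k + 1) = (3 * k + 2) + 1 := by ring
    rw [this, Nat.factorial_succ, show 3 * k + 2 = (3 * k + 1) + 1 from rfl, Nat.factorial_succ,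
      show 3 * k + 1 = (3 * k) + 1 from rfl, Nat.factorial_succ]
    ring

lemma asc_prod' (m : ℕ) : ∀ k : ℕ, (∏ j ∈ range k, (m + 1 + j)) * m ! = (m + k)!
  | 0 => by simp
  | k + 1 => by
    rw [Finset.prod_range_succ, mul_right_comm, asc_prod' m k,
      show m + (k + 1) = (m + k) + 1 from rfl, Nat.factorial_succ]
    ring

lemma asc_prod2 (m k : ℕ) : (∏ j ∈ range k, (m + 1 + j)) = k ! * (m + k).choose k := by
  have h1 := asc_prod' m k
  have h2 : (m + k).choose k * k ! * m ! = (m + k)! := by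
    have := Nat.choose_mul_factorial_mul_factorial (show k ≤ m + k by omega)
    rwa [show m + k - k = m by omega] at this
  apply Nat.eq_of_mul_eq_mul_right (Nat.factorial_pos m)
  rw [h1, ← h2]; ring

/-! ### The mod-`p` congruence -/

section zmod
variable (p : ℕ) [Fact p.Prime]

lemma three_m (hp3 : 3 < p) :
    (3 : ZMod p) * ((p / 3 : ℕ) : ZMod p) = -((p % 3 : ℕ) : ZMod p) := by
  have h : ((3 * (p / 3) + p % 3 : ℕ) : ZMod p) = 0 := by
    rw [show 3 * (p / 3) + p % 3 = p by omega]; exact ZMod.natCast_self p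
  push_cast at h
  linear_combination h

lemma mod3 (hp3 : 3 < p) : p % 3 = 1 ∨ p % 3 = 2 := by
  have hp := (Fact.out : p.Prime)
  have : ¬ (3 ∣ p) := by
    intro hd
    rcases (hp.eq_one_or_self_of_dvd 3 hd) with h | h <;> omega
  omega

lemma factor_eq (hp3 : 3 < p) (j : ℕ) :
    ((3 * j + 1) * (3 * j + 2) : ZMod p) =
      9 * ((j : ZMod p) + 1 + ((p / 3 : ℕ) : ZMod p)) * ((j : ZMod p) - ((p / 3 : ℕ) : ZMod p)) := by
  have h3 := three_m p hp3
  have key : (9 : ZMod p) * ((j : ZMod p) + 1 + ((p / 3 : ℕ) : ZMod p)) *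
        ((j : ZMod p) - ((p / 3 : ℕ) : ZMod p)) =
      (3 * (j : ZMod p) + 3 + (3 * ((p / 3 : ℕ) : ZMod p))) *
        (3 * (j : ZMod p) - (3 * ((p / 3 : ℕ) : ZMod p))) := by ring
  rcases mod3 p hp3 with h | h <;>
  · rw [h] at h3
    push_cast at h3 ⊢
    rw [key, h3]
    ring

lemma zkey (hp3 : 3 < p) (k : ℕ) (hk : k ≤ p / 3) :
    (((3 * k)! : ℕ) : ZMod p) =
      (-1) ^ k * (((p / 3).choose k : ℕ) : ZMod p) * (((p / 3 + k).choose k : ℕ) : ZMod p) *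
        27 ^ k * ((k ! : ℕ) : ZMod p) ^ 3 := by
  set m := p / 3 with hm
  rw [fact3 k, Nat.cast_prod]
  have step : ∀ j ∈ range k, (((3 * j + 1) * (3 * j + 2) * (3 * j + 3) : ℕ) : ZMod p) =
      ((27 : ZMod p) * ((m + 1 + j : ℕ) : ZMod p)) * (-((m - j : ℕ) : ZMod p)) *
        ((j + 1 : ℕ) : ZMod p) := by
    intro j hj
    have hj' : j < k := Finset.mem_range.mp hj
    have hjm : j ≤ m := le_trans (le_of_lt hj') hk
    have hfe := factor_eq p hp3 j
    push_cast
    rw [Nat.cast_sub hjm]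
    linear_combination (3 * (j : ZMod p) + 3) * hfe
  rw [Finset.prod_congr rfl step, Finset.prod_mul_distrib, Finset.prod_mul_distrib]
  have e1 : ∏ j ∈ range k, ((27 : ZMod p) * ((m + 1 + j : ℕ) : ZMod p)) =
      27 ^ k * ((k ! * (m + k).choose k : ℕ) : ZMod p) := by
    rw [Finset.prod_mul_distrib, Finset.prod_const, Finset.card_range, ← Nat.cast_prod,
      asc_prod2 m k]
  have e2 : ∏ j ∈ range k, (-((m - j : ℕ) : ZMod p)) =
      (-1) ^ k * ((k ! * m.choose k : ℕ) : ZMod p) := by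
    have : ∀ j ∈ range k, (-((m - j : ℕ) : ZMod p)) = (-1) * ((m - j : ℕ) : ZMod p) :=
      fun j _ => by ring
    rw [Finset.prod_congr rfl this, Finset.prod_mul_distrib, Finset.prod_const,
      Finset.card_range, ← Nat.cast_prod, ← Nat.descFactorial_eq_prod_range,
      Nat.descFactorial_eq_factorial_mul_choose]
  have e3 : ∏ j ∈ range k, ((j + 1 : ℕ) : ZMod p) = ((k ! : ℕ) : ZMod p) := by
    rw [← Nat.cast_prod, Finset.prod_range_add_one_eq_factorial]
  rw [e1, e2, e3]
  push_cast
  ring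

lemma pndvd (hp3 : 3 < p) (k : ℕ) (hk : k ≤ p / 3) : ¬ p ∣ 27 ^ k * (k !) ^ 3 := by
  have hp := (Fact.out : p.Prime)
  intro h
  rcases (Nat.Prime.dvd_mul hp).mp h with h | h
  · have h27 : p ∣ 27 := hp.dvd_of_dvd_pow h
    have h3 : p ∣ 3 := hp.dvd_of_dvd_pow (show p ∣ 3 ^ 3 by norm_num at h27 ⊢; exact h27)
    have := (Nat.prime_dvd_prime_iff_eq hp Nat.prime_three).mp h3
    omega
  · have hkf : p ∣ k ! := hp.dvd_of_dvd_pow h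
    have := (Nat.Prime.dvd_factorial hp).mp hkf
    omega

lemma stepk (hp3 : 3 < p) (k : ℕ) (hk : k ≤ p / 3) :
    ∃ c : ℚ,
      ((3 * k)! : ℚ) / (27 ^ k * (k ! : ℚ) ^ 3) -
          (-1 : ℚ) ^ k * ((p / 3).choose k : ℚ) * (((p / 3 + k).choose k : ℚ)) = p * c ∧
        ¬ p ∣ c.den := by
  have hd0 : ((27 ^ k * (k !) ^ 3 : ℕ) : ℚ) ≠ 0 := by positivity
  have hdvd : (p : ℤ) ∣ ((3 * k)! : ℤ) -
      (-1) ^ k * ((p / 3).choose k : ℤ) * ((p / 3 + k).choose k : ℤ) * 27 ^ k * ((k ! : ℤ)) ^ 3 := by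
    rw [← ZMod.intCast_zmod_eq_zero_iff_dvd]
    push_cast
    rw [zkey p hp3 k hk]
    ring
  obtain ⟨M, hM⟩ := hdvd
  refine ⟨(M : ℚ) / ((27 ^ k * (k !) ^ 3 : ℕ) : ℚ), ?_, ?_⟩
  · have hMQ : ((3 * k)! : ℚ) -
        (-1) ^ k * ((p / 3).choose k : ℚ) * ((p / 3 + k).choose k : ℚ) * 27 ^ k * ((k ! : ℚ)) ^ 3 =
        (p : ℚ) * (M : ℚ) := by
      have := congrArg (Int.cast : ℤ → ℚ) hM
      push_cast at this
      linear_combination this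
    push_cast at hd0 ⊢
    field_simp
    linear_combination hMQ
  · intro hden
    have h1 : ((M : ℚ) / ((27 ^ k * (k !) ^ 3 : ℕ) : ℚ)).den ∣ 27 ^ k * (k !) ^ 3 := by
      have heq : (M : ℚ) / ((27 ^ k * (k !) ^ 3 : ℕ) : ℚ) =
          Rat.divInt M ((27 ^ k * (k !) ^ 3 : ℕ) : ℤ) := by
        rw [Rat.divInt_eq_div]; push_cast; ring
      have h2 := Rat.den_dvd M ((27 ^ k * (k !) ^ 3 : ℕ) : ℤ)
      rw [← heq] at h2
      exact_mod_cast h2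
    exact pndvd p hp3 k hk (hden.trans h1)
end zmod

theorem stmt9 (p : ℕ) (hp : p.Prime) (hp3 : 3 < p) (x : ℚ) (hx : ¬ (p ∣ x.den)) :
    ratCongr p 1
      (∑ k ∈ Finset.range (p / 3 + 1),
        ((3 * k).factorial : ℚ) / (27 ^ k * (k.factorial : ℚ) ^ 3) *
          (x ^ k - (-1 : ℚ) ^ (p / 3) * (1 - x) ^ k)) 0 := by
  haveI : Fact p.Prime := ⟨hp⟩
  have H : ∀ k : ℕ, ∃ c : ℚ, k ≤ p / 3 →
      (((3 * k)! : ℚ) / (27 ^ k * (k ! : ℚ) ^ 3) -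
          (-1 : ℚ) ^ k * ((p / 3).choose k : ℚ) * (((p / 3 + k).choose k : ℚ)) = p * c ∧
        ¬ p ∣ c.den) := by
    intro k
    by_cases hk : k ≤ p / 3
    · obtain ⟨c, hc1, hc2⟩ := stepk p hp3 k hk
      exact ⟨c, fun _ => ⟨hc1, hc2⟩⟩
    · exact ⟨0, fun h => absurd h hk⟩
  choose c hc using H
  refine ⟨∑ k ∈ Finset.range (p / 3 + 1),
    c k * (x ^ k - (-1 : ℚ) ^ (p / 3) * (1 - x) ^ k), ?_, ?_⟩
  · rw [sub_zero, pow_one]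
    have hsplit : (∑ k ∈ Finset.range (p / 3 + 1),
        ((3 * k).factorial : ℚ) / (27 ^ k * (k.factorial : ℚ) ^ 3) *
          (x ^ k - (-1 : ℚ) ^ (p / 3) * (1 - x) ^ k)) =
        (∑ k ∈ Finset.range (p / 3 + 1),
          (((3 * k)! : ℚ) / (27 ^ k * (k ! : ℚ) ^ 3) -
            (-1 : ℚ) ^ k * ((p / 3).choose k : ℚ) * (((p / 3 + k).choose k : ℚ))) *
            (x ^ k - (-1 : ℚ) ^ (p / 3) * (1 - x) ^ k)) +
        (∑ k ∈ Finset.range (p / 3 + 1),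
          ((-1 : ℚ) ^ k * ((p / 3).choose k : ℚ) * (((p / 3 + k).choose k : ℚ)) * x ^ k -
            (-1 : ℚ) ^ (p / 3) *
              ((-1 : ℚ) ^ k * ((p / 3).choose k : ℚ) * (((p / 3 + k).choose k : ℚ)) *
                (1 - x) ^ k))) := by
      rw [← Finset.sum_add_distrib]
      apply Finset.sum_congr rfl
      intro k _
      ring
    have h0 : (∑ k ∈ Finset.range (p / 3 + 1),
          ((-1 : ℚ) ^ k * ((p / 3).choose k : ℚ) * (((p / 3 + k).choose k : ℚ)) * x ^ k -
            (-1 : ℚ) ^ (p / 3) *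
              ((-1 : ℚ) ^ k * ((p / 3).choose k : ℚ) * (((p / 3 + k).choose k : ℚ)) *
                (1 - x) ^ k))) = 0 := by
      rw [Finset.sum_sub_distrib, ← Finset.mul_sum, sym (p / 3) x]
      have hsq : (-1 : ℚ) ^ (p / 3) * (-1 : ℚ) ^ (p / 3) = 1 := by rw [← mul_pow]; norm_num
      set F := ∑ k ∈ range (p / 3 + 1),
        (-1 : ℚ) ^ k * ((p / 3).choose k : ℚ) * (((p / 3 + k).choose k : ℚ)) * x ^ k with hF
      linear_combination (-F) * hsq
    have h1 : (∑ k ∈ Finset.range (p / 3 + 1),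
          (((3 * k)! : ℚ) / (27 ^ k * (k ! : ℚ) ^ 3) -
            (-1 : ℚ) ^ k * ((p / 3).choose k : ℚ) * (((p / 3 + k).choose k : ℚ))) *
            (x ^ k - (-1 : ℚ) ^ (p / 3) * (1 - x) ^ k)) =
        (p : ℚ) * ∑ k ∈ Finset.range (p / 3 + 1),
          c k * (x ^ k - (-1 : ℚ) ^ (p / 3) * (1 - x) ^ k) := by
      rw [Finset.mul_sum]
      apply Finset.sum_congr rfl
      intro k hk
      rw [(hc k (Finset.mem_range_succ_iff.mp hk)).1]
      ring
    rw [hsplit, h0, h1, add_zero]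
  · apply dnd_sum hp
    intro k hk
    apply dnd_mul hp (hc k (Finset.mem_range_succ_iff.mp hk)).2
    apply dnd_sub hp (dnd_pow hp hx k)
    exact dnd_mul hp (dnd_pow hp (dnd_neg hp (dnd_one hp)) (p / 3))
      (dnd_pow hp (dnd_sub hp (dnd_one hp) hx) k)
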